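/- Let a, b > 0, ν = (k₀+p)/(k₀+2) with p > 2 and k₀ ≥ 0 (so ν > 1). If y : (0,∞) → ℝ is positive, absolutely continuous, and satisfies y' + a y^ν ≤ b, then for every τ > 0 there is a constant c(τ, a, b, ν), independent of y, such that y(t) ≤ c(τ, a, b, ν) for all t ≥ τ. -/

import Mathlib

open Real

/-- Crossing lemma: if `y s ≤ K` and `y` has negative derivative whenever it exceeds
`K` on `(s, t]`, then `y t ≤ K`. -/
lemma ghidaglia_cross (y : ℝ → ℝ) (K s t : ℝ) (hs : 0 < s) (hst : s ≤ t)
    (hdiff : ∀ u, 0 < u → DifferentiableAt ℝ y u)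
    (hneg : ∀ u, s < u → u ≤ t → K < y u → deriv y u < 0)
    (hys : y s ≤ K) : y t ≤ K := by
  set S : Set ℝ := {u | u ∈ Set.Icc s t ∧ y u ≤ K} with hS
  have hsS : s ∈ S := ⟨⟨le_refl s, hst⟩, hys⟩
  have hne : S.Nonempty := ⟨s, hsS⟩
  have hbdd : BddAbove S := ⟨t, fun u hu => hu.1.2⟩
  have hyc : ContinuousOn y (Set.Icc s t) := fun u hu =>
    ((hdiff u (lt_of_lt_of_le hs hu.1)).continuousAt).continuousWithinAt
  have hclosed : IsClosed S := by
    have : S = Set.Icc s t ∩ y ⁻¹' Set.Iic K := by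
      ext u; simp [hS, Set.mem_Icc, and_assoc]
    rw [this]
    exact hyc.preimage_isClosed_of_isClosed isClosed_Icc isClosed_Iic
  have hu₀S : sSup S ∈ S := hclosed.csSup_mem hne hbdd
  set u₀ := sSup S with hu₀
  rcases eq_or_lt_of_le hu₀S.1.2 with h | h
  · rw [← h]; exact hu₀S.2
  · -- u₀ < t, and y > K on (u₀, t]
    have hgt : ∀ u, u₀ < u → u ≤ t → K < y u := by
      intro u hu hut
      by_contra hc
      push_neg at hc
      have : u ∈ S := ⟨⟨le_trans hu₀S.1.1 hu.le, hut⟩, hc⟩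
      exact absurd (le_csSup hbdd this) (not_le.mpr hu)
    have hanti : StrictAntiOn y (Set.Icc u₀ t) := by
      apply strictAntiOn_of_deriv_neg (convex_Icc _ _)
      · exact hyc.mono (Set.Icc_subset_Icc_left hu₀S.1.1)
      · intro u hu
        rw [interior_Icc] at hu
        exact hneg u (lt_of_le_of_lt hu₀S.1.1 hu.1) hu.2.le
          (hgt u hu.1 hu.2.le)
    have := hanti ⟨le_refl u₀, h.le⟩ ⟨h.le, le_refl t⟩ h
    exact le_trans this.le hu₀S.2

/-- Uniform-in-initial-data bound from the Ghidaglia inequality, with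
`ν = (k₀+p)/(k₀+2)`. -/
theorem uniform_bound_from_ghidaglia (k₀ p a b τ : ℝ)
    (hp : 2 < p) (hk₀ : 0 ≤ k₀) (ha : 0 < a) (hb : 0 < b) (hτ : 0 < τ) :
    ∃ c : ℝ, ∀ y : ℝ → ℝ,
      (∀ t, 0 < t → 0 < y t) →
      (∀ t, 0 < t → DifferentiableAt ℝ y t) →
      (∀ t, 0 < t → deriv y t + a * (y t) ^ ((k₀ + p) / (k₀ + 2)) ≤ b) →
      ∀ t, τ ≤ t → y t ≤ c := by
  set ν : ℝ := (k₀ + p) / (k₀ + 2) with hνdef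
  have hk2 : (0:ℝ) < k₀ + 2 := by linarith
  have hν1 : 1 < ν := (one_lt_div hk2).mpr (by linarith)
  have hν0 : 0 < ν := lt_trans one_pos hν1
  have hνm1 : 0 < ν - 1 := by linarith
  have hq : (0:ℝ) < 2 * b / a := by positivity
  set K : ℝ := (2 * b / a) ^ ν⁻¹ with hKdef
  have hK : 0 < K := rpow_pos_of_pos hq _
  have hKν : K ^ ν = 2 * b / a := Real.rpow_inv_rpow hq.le (ne_of_gt hν0)
  set m : ℝ := (ν - 1) * a / 2 with hmdef
  have hm : 0 < m := by positivity
  set c₂ : ℝ := ((m * τ / 2)⁻¹) ^ (ν - 1)⁻¹ with hc₂def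
  refine ⟨max K c₂, ?_⟩
  intro y hpos hdiff hineq t ht
  have htpos : 0 < t := lt_of_lt_of_le hτ ht
  by_cases hcase : ∃ s, 0 < s ∧ s ≤ t ∧ y s ≤ K
  · -- Case 1: y dips below K before time t, so it stays ≤ K at t.
    obtain ⟨s, hs0, hst, hys⟩ := hcase
    have : y t ≤ K := by
      apply ghidaglia_cross y K s t hs0 hst hdiff _ hys
      intro u hsu hut hKu
      have hu0 : 0 < u := lt_trans hs0 hsu
      have h1 := hineq u hu0
      have h2 : K ^ ν < y u ^ ν := Real.rpow_lt_rpow hK.le hKu hν0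
      rw [hKν] at h2
      have h3 : 2 * b < a * (y u ^ ν) := by
        rw [div_lt_iff₀ ha] at h2; linarith
      linarith
    exact le_trans this (le_max_left _ _)
  · -- Case 2: y > K on all of (0, t]; use the nonlinear decay.
    push_neg at hcase
    have hKy : ∀ s, 0 < s → s ≤ t → K < y s := fun s h1 h2 => hcase s h1 h2
    -- w u = y u ^ (1 - ν); it grows at rate ≥ m while y > K
    have hg : MonotoneOn (fun u => y u ^ (1 - ν) - m * u) (Set.Icc (t/2) t) := by
      have hderiv : ∀ u ∈ Set.Icc (t/2) t,
          HasDerivAt (fun x => y x ^ (1 - ν) - m * x)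
            (deriv y u * (1 - ν) * y u ^ (1 - ν - 1) - m) u := by
        intro u hu
        have hu0 : 0 < u := lt_of_lt_of_le (by linarith) hu.1
        have hy0 : 0 < y u := hpos u hu0
        have h1 : HasDerivAt (fun x => y x ^ (1 - ν))
            (deriv y u * (1 - ν) * y u ^ (1 - ν - 1)) u :=
          ((hdiff u hu0).hasDerivAt).rpow_const (Or.inl hy0.ne')
        simpa using h1.fun_sub ((hasDerivAt_id u).const_mul m)
      apply monotoneOn_of_deriv_nonneg (convex_Icc _ _)
      · intro u hu
        exact ((hderiv u hu).continuousAt).continuousWithinAt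
      · intro u hu
        rw [interior_Icc] at hu
        exact ((hderiv u ⟨hu.1.le, hu.2.le⟩).differentiableAt).differentiableWithinAt
      · intro u hu
        rw [interior_Icc] at hu
        have hu0 : 0 < u := lt_of_lt_of_le (by linarith) hu.1.le
        have hy0 : 0 < y u := hpos u hu0
        rw [(hderiv u ⟨hu.1.le, hu.2.le⟩).deriv]
        have hKu : K < y u := hKy u hu0 hu.2.le
        set Y : ℝ := y u ^ ν with hYdef
        have hYpos : 0 < Y := rpow_pos_of_pos hy0 _
        have h2 : K ^ ν < Y := Real.rpow_lt_rpow hK.le hKu hν0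
        rw [hKν] at h2
        have h3 : 2 * b < a * Y := by rw [div_lt_iff₀ ha] at h2; linarith
        have hexp : y u ^ (1 - ν - 1) = Y⁻¹ := by
          rw [show (1 - ν - 1 : ℝ) = -ν by ring, Real.rpow_neg hy0.le]
        rw [hexp]
        have hD : deriv y u ≤ b - a * Y := by
          have := hineq u hu0; linarith
        have hc : (1 - ν) * Y⁻¹ ≤ 0 := by
          apply mul_nonpos_of_nonpos_of_nonneg (by linarith) (by positivity)
        have h4 : (b - a * Y) * ((1 - ν) * Y⁻¹) ≤ deriv y u * ((1 - ν) * Y⁻¹) :=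
          mul_le_mul_of_nonpos_right hD hc
        have h5 : m ≤ (b - a * Y) * ((1 - ν) * Y⁻¹) := by
          rw [show (b - a * Y) * ((1 - ν) * Y⁻¹) = (b - a * Y) * (1 - ν) / Y by ring,
            le_div_iff₀ hYpos]
          nlinarith [mul_nonneg hνm1.le (by linarith : (0:ℝ) ≤ a * Y - 2 * b)]
        have : m ≤ deriv y u * (1 - ν) * Y⁻¹ := by
          calc m ≤ (b - a * Y) * ((1 - ν) * Y⁻¹) := h5
            _ ≤ deriv y u * ((1 - ν) * Y⁻¹) := h4
            _ = deriv y u * (1 - ν) * Y⁻¹ := by ring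
        linarith
    -- From monotonicity: y t ^ (1-ν) ≥ m * t / 2 ≥ m * τ / 2
    have hmem1 : t/2 ∈ Set.Icc (t/2) t := ⟨le_refl _, by linarith⟩
    have hmem2 : t ∈ Set.Icc (t/2) t := ⟨by linarith, le_refl _⟩
    have hmono := hg hmem1 hmem2 (by linarith)
    have hyhalf : 0 < y (t/2) ^ (1 - ν) := rpow_pos_of_pos (hpos _ (by linarith)) _
    have hw : m * τ / 2 ≤ y t ^ (1 - ν) := by
      have h1 : m * τ ≤ m * t := by
        apply mul_le_mul_of_nonneg_left ht hm.le
      have h2 : y (t/2) ^ (1 - ν) - m * (t/2) ≤ y t ^ (1 - ν) - m * t := hmono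
      nlinarith
    have hwpos : 0 < m * τ / 2 := by positivity
    have hyt : 0 < y t := hpos t htpos
    -- y t ^ (1-ν) = (y t ^ (ν-1))⁻¹
    have hinv : y t ^ (1 - ν) = (y t ^ (ν - 1))⁻¹ := by
      rw [show (1 - ν : ℝ) = -(ν - 1) by ring, Real.rpow_neg hyt.le]
    rw [hinv] at hw
    have hp1 : 0 < y t ^ (ν - 1) := rpow_pos_of_pos hyt _
    have h6 : y t ^ (ν - 1) ≤ (m * τ / 2)⁻¹ := by
      rw [← inv_inv (y t ^ (ν - 1))]
      exact inv_anti₀ hwpos hw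
    have h7 : (y t ^ (ν - 1)) ^ (ν - 1)⁻¹ ≤ ((m * τ / 2)⁻¹) ^ (ν - 1)⁻¹ :=
      Real.rpow_le_rpow hp1.le h6 (by positivity)
    rw [Real.rpow_rpow_inv hyt.le (ne_of_gt hνm1)] at h7
    exact le_trans h7 (le_max_right _ _)
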